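/- Let k ≥ 3 and G = C(3k+1; {1,2,4}). For e = v_1 v_3, the set S = {v_2, v_{3k−2}, v_{3k}, v_{3k+1}} ∪ ⋃_{t=2}^{k−1} {v_{3t−2}, v_{3t−1}} is a vertex cut of G−e with |S| = 2k and c((G−e)−S) = k; hence τ(G−e) ≤ 2 < 2k/(k−1). -/

import Mathlib

open SimpleGraph

def circGraph (n : ℕ) (s : Set (ZMod n)) : SimpleGraph (ZMod n) where
  Adj i j := i ≠ j ∧ (i - j ∈ s ∨ j - i ∈ s)
  symm := ⟨fun i j h => ⟨h.1.symm, h.2.symm⟩⟩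
  loopless := ⟨fun i h => h.1 rfl⟩

/-- Number of connected components of `G - S`. -/
noncomputable def numComp {V : Type*} (G : SimpleGraph V) (S : Set V) : ℕ :=
  Nat.card ((G.induce Sᶜ).ConnectedComponent)

/-- `S` is a vertex cut: removing `S` leaves a disconnected graph. -/
def IsVertexCut {V : Type*} (G : SimpleGraph V) (S : Set V) : Prop :=
  1 < numComp G S

/-- Toughness: minimum of |S| / c(G - S) over vertex cuts `S`. -/
noncomputable def toughness {V : Type*} (G : SimpleGraph V) : ℝ :=
  sInf {x : ℝ | ∃ S : Set V, IsVertexCut G S ∧ x = (S.ncard : ℝ) / (numComp G S : ℝ)}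

def MinimallyTough {V : Type*} (G : SimpleGraph V) (t : ℝ) : Prop :=
  toughness G = t ∧ ∀ e ∈ G.edgeSet, toughness (G.deleteEdges {e}) < t

def Sdef (k : ℕ) : Set (ZMod (3*k+1)) :=
  {v | v = ((2 : ℕ) : ZMod (3*k+1)) ∨ v = ((3*k-2 : ℕ) : ZMod (3*k+1)) ∨
    v = ((3*k : ℕ) : ZMod (3*k+1)) ∨ v = ((3*k+1 : ℕ) : ZMod (3*k+1)) ∨
    ∃ t : ℕ, 2 ≤ t ∧ t ≤ k - 1 ∧
      (v = ((3*t-2 : ℕ) : ZMod (3*k+1)) ∨ v = ((3*t-1 : ℕ) : ZMod (3*k+1)))}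

lemma cast_eq_iff (k : ℕ) (z : ZMod (3*k+1)) (m : ℕ) :
    z = (m : ZMod (3*k+1)) ↔ z.val = m % (3*k+1) := by
  constructor
  · rintro rfl; exact ZMod.val_natCast _ m
  · intro h
    rw [← ZMod.natCast_rightInverse z, h, ZMod.natCast_mod]

lemma mem_compl_iff (k : ℕ) (hk : 3 ≤ k) (v : ZMod (3*k+1)) :
    v ∈ (Sdef k)ᶜ ↔
      (v.val = 1 ∨ v.val = 3*k-1 ∨ ∃ t : ℕ, 1 ≤ t ∧ t ≤ k-1 ∧ v.val = 3*t) := by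
  have hlt := ZMod.val_lt v
  constructor
  · intro h
    simp only [Set.mem_compl_iff, Sdef, Set.mem_setOf_eq] at h
    push_neg at h
    obtain ⟨h1, h2, h3, h4, h5⟩ := h
    rw [Ne, cast_eq_iff, Nat.mod_eq_of_lt (by omega)] at h1 h2 h3
    rw [Ne, cast_eq_iff, Nat.mod_self] at h4
    by_cases c0 : v.val % 3 = 0
    · right; right; exact ⟨v.val/3, by omega, by omega, by omega⟩
    by_cases c1 : v.val % 3 = 1
    · by_cases ca : v.val = 1
      · left; exact ca
      · exfalso
        obtain ⟨e1, e2⟩ := h5 ((v.val+2)/3) (by omega) (by omega)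
        rw [Ne, cast_eq_iff, Nat.mod_eq_of_lt (by omega)] at e1
        omega
    · by_cases ca : v.val = 3*k-1
      · right; left; exact ca
      · exfalso
        obtain ⟨e1, e2⟩ := h5 ((v.val+1)/3) (by omega) (by omega)
        rw [Ne, cast_eq_iff, Nat.mod_eq_of_lt (by omega)] at e2
        omega
  · intro h
    simp only [Set.mem_compl_iff, Sdef, Set.mem_setOf_eq]
    push_neg
    refine ⟨?_, ?_, ?_, ?_, ?_⟩
    · rw [Ne, cast_eq_iff, Nat.mod_eq_of_lt (by omega)]
      rcases h with h|h|⟨t,ht1,ht2,h⟩ <;> omega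
    · rw [Ne, cast_eq_iff, Nat.mod_eq_of_lt (by omega)]
      rcases h with h|h|⟨t,ht1,ht2,h⟩ <;> omega
    · rw [Ne, cast_eq_iff, Nat.mod_eq_of_lt (by omega)]
      rcases h with h|h|⟨t,ht1,ht2,h⟩ <;> omega
    · rw [Ne, cast_eq_iff, Nat.mod_self]
      rcases h with h|h|⟨t,ht1,ht2,h⟩ <;> omega
    · intro s hs1 hs2
      constructor <;> rw [Ne, cast_eq_iff, Nat.mod_eq_of_lt (by omega)] <;>
        rcases h with h|h|⟨t,ht1,ht2,h⟩ <;> omega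

def Gdef' (k : ℕ) : SimpleGraph (ZMod (3*k+1)) :=
  (circGraph (3*k+1) {1, 2, 4}).deleteEdges
    {s(((1 : ℕ) : ZMod (3*k+1)), ((3 : ℕ) : ZMod (3*k+1)))}

lemma sub_eq_iff' (k : ℕ) (x y : ZMod (3*k+1)) (d : ℕ) :
    x - y = (d : ZMod (3*k+1)) ↔ x.val = (d + y.val) % (3*k+1) := by
  rw [sub_eq_iff_eq_add, show (d : ZMod (3*k+1)) + y = ((d + y.val : ℕ) : ZMod (3*k+1)) by
    rw [Nat.cast_add, ZMod.natCast_rightInverse y], cast_eq_iff]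

lemma arith (k : ℕ) (hk : 3 ≤ k) (a b d : ℕ) (ha' : a < 3*k+1) (hb' : b < 3*k+1)
    (hA : a = 1 ∨ a = 3*k-1 ∨ ∃ t : ℕ, 1 ≤ t ∧ t ≤ k-1 ∧ a = 3*t)
    (hB : b = 1 ∨ b = 3*k-1 ∨ ∃ t : ℕ, 1 ≤ t ∧ t ≤ k-1 ∧ b = 3*t)
    (hd : d = 1 ∨ d = 2 ∨ d = 4)
    (h : a = (d + b) % (3*k+1)) :
    (a = 3 ∧ b = 1) ∨ (a = 3*k-1 ∧ b = 3*k-3) := by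
  have hmod : (d + b) % (3*k+1) = d + b ∨ (d + b) % (3*k+1) = d + b - (3*k+1) := by
    rcases Nat.lt_or_ge (d + b) (3*k+1) with h'|h'
    · left; exact Nat.mod_eq_of_lt h'
    · right
      rw [Nat.mod_eq_sub_mod h', Nat.mod_eq_of_lt (by omega)]
  rcases hA with hA|hA|⟨t,ht1,ht2,hA⟩ <;> rcases hB with hB|hB|⟨s,hs1,hs2,hB⟩ <;> omega

lemma A_mem (k : ℕ) (hk : 3 ≤ k) : ((3*k-3 : ℕ) : ZMod (3*k+1)) ∈ (Sdef k)ᶜ := by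
  rw [mem_compl_iff k hk]
  right; right
  exact ⟨k-1, by omega, le_refl _, by rw [ZMod.val_natCast, Nat.mod_eq_of_lt (by omega)]; omega⟩

lemma B_mem (k : ℕ) (hk : 3 ≤ k) : ((3*k-1 : ℕ) : ZMod (3*k+1)) ∈ (Sdef k)ᶜ := by
  rw [mem_compl_iff k hk]
  right; left
  rw [ZMod.val_natCast, Nat.mod_eq_of_lt (by omega)]

lemma adj_iff (k : ℕ) (hk : 3 ≤ k) (x y : ZMod (3*k+1))
    (hx : x ∈ (Sdef k)ᶜ) (hy : y ∈ (Sdef k)ᶜ) :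
    (Gdef' k).Adj x y ↔
      ((x = ((3*k-3 : ℕ) : ZMod (3*k+1)) ∧ y = ((3*k-1 : ℕ) : ZMod (3*k+1))) ∨
       (x = ((3*k-1 : ℕ) : ZMod (3*k+1)) ∧ y = ((3*k-3 : ℕ) : ZMod (3*k+1)))) := by
  have hxv := ZMod.val_lt x
  have hyv := ZMod.val_lt y
  rw [mem_compl_iff k hk] at hx hy
  constructor
  · rintro ⟨⟨hne, hadj⟩, hdel⟩
    simp only [Set.mem_insert_iff, Set.mem_singleton_iff] at hadj
    have h124 : ∀ z w : ZMod (3*k+1),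
        (z - w = 1 ∨ z - w = 2 ∨ z - w = 4) → ∃ d : ℕ, (d = 1 ∨ d = 2 ∨ d = 4) ∧
          z.val = (d + w.val) % (3*k+1) := by
      intro z w hzw
      rcases hzw with h|h|h
      · exact ⟨1, Or.inl rfl, by rw [← sub_eq_iff' k, Nat.cast_one]; exact h⟩
      · exact ⟨2, Or.inr (Or.inl rfl), by rw [← sub_eq_iff' k, Nat.cast_ofNat]; exact h⟩
      · exact ⟨4, Or.inr (Or.inr rfl), by rw [← sub_eq_iff' k, Nat.cast_ofNat]; exact h⟩
    have key : (x.val = 3 ∧ y.val = 1) ∨ (x.val = 3*k-1 ∧ y.val = 3*k-3) ∨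
        (y.val = 3 ∧ x.val = 1) ∨ (y.val = 3*k-1 ∧ x.val = 3*k-3) := by
      rcases hadj with h|h
      · obtain ⟨d, hd, he⟩ := h124 x y h
        rcases arith k hk x.val y.val d hxv hyv hx hy hd he with h'|h'
        · exact Or.inl h'
        · exact Or.inr (Or.inl h')
      · obtain ⟨d, hd, he⟩ := h124 y x h
        rcases arith k hk y.val x.val d hyv hxv hy hx hd he with h'|h'
        · exact Or.inr (Or.inr (Or.inl h'))
        · exact Or.inr (Or.inr (Or.inr h'))
    rcases key with ⟨h1,h2⟩|⟨h1,h2⟩|⟨h1,h2⟩|⟨h1,h2⟩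
    · exfalso
      apply hdel
      rw [SimpleGraph.fromEdgeSet_adj]
      refine ⟨?_, hne⟩
      rw [Set.mem_singleton_iff, Sym2.eq_iff]
      right
      constructor
      · rw [cast_eq_iff, Nat.mod_eq_of_lt (by omega)]; exact h1
      · rw [cast_eq_iff, Nat.mod_eq_of_lt (by omega)]; exact h2
    · right
      constructor
      · rw [cast_eq_iff, Nat.mod_eq_of_lt (by omega)]; omega
      · rw [cast_eq_iff, Nat.mod_eq_of_lt (by omega)]; omega
    · exfalso
      apply hdel
      rw [SimpleGraph.fromEdgeSet_adj]
      refine ⟨?_, hne⟩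
      rw [Set.mem_singleton_iff, Sym2.eq_iff]
      left
      constructor
      · rw [cast_eq_iff, Nat.mod_eq_of_lt (by omega)]; exact h2
      · rw [cast_eq_iff, Nat.mod_eq_of_lt (by omega)]; exact h1
    · left
      constructor
      · rw [cast_eq_iff, Nat.mod_eq_of_lt (by omega)]; omega
      · rw [cast_eq_iff, Nat.mod_eq_of_lt (by omega)]; omega
  · intro h
    have hAval : ((3*k-3 : ℕ) : ZMod (3*k+1)).val = 3*k-3 :=
      ZMod.val_cast_of_lt (by omega)
    have hBval : ((3*k-1 : ℕ) : ZMod (3*k+1)).val = 3*k-1 :=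
      ZMod.val_cast_of_lt (by omega)
    have hadjAB : (Gdef' k).Adj ((3*k-3 : ℕ) : ZMod (3*k+1)) ((3*k-1 : ℕ) : ZMod (3*k+1)) := by
      refine ⟨⟨?_, ?_⟩, ?_⟩
      · intro he
        have := congrArg ZMod.val he
        rw [hAval, hBval] at this
        omega
      · right
        right; left
        show ((3*k-1 : ℕ) : ZMod (3*k+1)) - ((3*k-3 : ℕ) : ZMod (3*k+1)) = 2
        rw [show ((2 : ZMod (3*k+1))) = ((2:ℕ) : ZMod (3*k+1)) by rw [Nat.cast_ofNat],
          sub_eq_iff' k, hAval, Nat.mod_eq_of_lt (by omega), hBval]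
        omega
      · intro hcon
        rw [SimpleGraph.fromEdgeSet_adj, Set.mem_singleton_iff, Sym2.eq_iff] at hcon
        rcases hcon.1 with ⟨h1,h2⟩|⟨h1,h2⟩
        · have := congrArg ZMod.val h1
          rw [hAval, ZMod.val_cast_of_lt (show 1 < 3*k+1 by omega)] at this
          omega
        · have := congrArg ZMod.val h1
          rw [hAval, ZMod.val_cast_of_lt (show 3 < 3*k+1 by omega)] at this
          omega
    rcases h with ⟨rfl, rfl⟩|⟨rfl, rfl⟩
    · exact hadjAB
    · exact hadjAB.symm

lemma reach_iff (k : ℕ) (hk : 3 ≤ k) (u v : ↥((Sdef k)ᶜ)) :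
    ((Gdef' k).induce ((Sdef k)ᶜ)).Reachable u v ↔
      (u = v ∨
        ((u : ZMod (3*k+1)) = ((3*k-3:ℕ):ZMod (3*k+1)) ∧
          (v : ZMod (3*k+1)) = ((3*k-1:ℕ):ZMod (3*k+1))) ∨
        ((u : ZMod (3*k+1)) = ((3*k-1:ℕ):ZMod (3*k+1)) ∧
          (v : ZMod (3*k+1)) = ((3*k-3:ℕ):ZMod (3*k+1)))) := by
  have hABne : ((3*k-3:ℕ):ZMod (3*k+1)) ≠ ((3*k-1:ℕ):ZMod (3*k+1)) := by
    intro h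
    have := congrArg ZMod.val h
    rw [ZMod.val_cast_of_lt (by omega), ZMod.val_cast_of_lt (by omega)] at this
    omega
  constructor
  · rintro ⟨w⟩
    induction w with
    | nil => exact Or.inl rfl
    | @cons a b c h p ih =>
      have h' : (Gdef' k).Adj a.1 b.1 := h
      rw [adj_iff k hk _ _ a.2 b.2] at h'
      rcases ih with rfl | ⟨h1,h2⟩ | ⟨h1,h2⟩
      · rcases h' with ⟨h3,h4⟩|⟨h3,h4⟩
        · exact Or.inr (Or.inl ⟨h3,h4⟩)
        · exact Or.inr (Or.inr ⟨h3,h4⟩)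
      · rcases h' with ⟨h3,h4⟩|⟨h3,h4⟩
        · exact absurd (h1.symm.trans h4) hABne
        · exact Or.inl (Subtype.ext (h3.trans h2.symm))
      · rcases h' with ⟨h3,h4⟩|⟨h3,h4⟩
        · exact Or.inl (Subtype.ext (h3.trans h2.symm))
        · exact absurd (h4.symm.trans h1) hABne
  · rintro (rfl | ⟨h1,h2⟩ | ⟨h1,h2⟩)
    · exact SimpleGraph.Reachable.refl _
    · exact SimpleGraph.Adj.reachable
        ((adj_iff k hk u.1 v.1 u.2 v.2).2 (Or.inl ⟨h1,h2⟩))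
    · exact SimpleGraph.Adj.reachable
        ((adj_iff k hk u.1 v.1 u.2 v.2).2 (Or.inr ⟨h1,h2⟩))

def fval (k : ℕ) (v : ZMod (3*k+1)) : ℕ :=
  if v.val = 1 then 0 else if v.val = 3*k-1 then k-1 else min (v.val/3) (k-1)

lemma fval_lt (k : ℕ) (hk : 3 ≤ k) (v : ZMod (3*k+1)) : fval k v < k := by
  unfold fval; split_ifs <;> omega

lemma fval_spec (k : ℕ) (hk : 3 ≤ k) (v : ZMod (3*k+1)) (hv : v ∈ (Sdef k)ᶜ) :
    (v.val = 1 ∧ fval k v = 0) ∨ (v.val = 3*k-1 ∧ fval k v = k-1) ∨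
      (∃ t : ℕ, 1 ≤ t ∧ t ≤ k-1 ∧ v.val = 3*t ∧ fval k v = t) := by
  rcases (mem_compl_iff k hk v).1 hv with h|h|⟨t,h1,h2,h3⟩
  · left; exact ⟨h, by unfold fval; rw [if_pos h]⟩
  · right; left; exact ⟨h, by unfold fval; rw [if_neg (by omega), if_pos h]⟩
  · right; right
    refine ⟨t, h1, h2, h3, ?_⟩
    unfold fval
    rw [if_neg (by omega), if_neg (by omega)]
    omega

lemma card_comp (k : ℕ) (hk : 3 ≤ k) :
    Nat.card ((Gdef' k).induce ((Sdef k)ᶜ)).ConnectedComponent = k := by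
  have hk0 : 0 < k := by omega
  let f : ↥((Sdef k)ᶜ) → Fin k := fun u => ⟨fval k u.1, fval_lt k hk u.1⟩
  have hwell : ∀ (v w : ↥((Sdef k)ᶜ)) (p : ((Gdef' k).induce ((Sdef k)ᶜ)).Walk v w),
      p.IsPath → f v = f w := by
    intro v w p _
    have hr := (reach_iff k hk v w).1 ⟨p⟩
    rcases hr with rfl | ⟨h1,h2⟩ | ⟨h1,h2⟩
    · rfl
    all_goals {
      have e1 := congrArg ZMod.val h1
      have e2 := congrArg ZMod.val h2
      rw [ZMod.val_cast_of_lt (by omega)] at e1 e2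
      apply Fin.ext
      show fval k v.1 = fval k w.1
      unfold fval
      split_ifs <;> omega }
  let F := SimpleGraph.ConnectedComponent.lift f hwell
  have hbij : Function.Bijective F := by
    constructor
    · intro c d h
      obtain ⟨u, rfl⟩ := c.exists_rep
      obtain ⟨w, rfl⟩ := d.exists_rep
      apply SimpleGraph.ConnectedComponent.sound
      rw [reach_iff k hk]
      have h' : fval k u.1 = fval k w.1 := congrArg Fin.val h
      rcases fval_spec k hk u.1 u.2 with ⟨e1,e2⟩|⟨e1,e2⟩|⟨t,t1,t2,e1,e2⟩ <;>
        rcases fval_spec k hk w.1 w.2 with ⟨f1,f2⟩|⟨f1,f2⟩|⟨s,s1,s2,f1,f2⟩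
      · exact Or.inl (Subtype.ext (ZMod.val_injective _ (by rw [e1, f1] <;> omega)))
      · omega
      · omega
      · omega
      · exact Or.inl (Subtype.ext (ZMod.val_injective _ (by rw [e1, f1] <;> omega)))
      · right; right
        constructor
        · rw [cast_eq_iff, Nat.mod_eq_of_lt (by omega)]; omega
        · rw [cast_eq_iff, Nat.mod_eq_of_lt (by omega)]; omega
      · omega
      · right; left
        constructor
        · rw [cast_eq_iff, Nat.mod_eq_of_lt (by omega)]; omega
        · rw [cast_eq_iff, Nat.mod_eq_of_lt (by omega)]; omega
      · exact Or.inl (Subtype.ext (ZMod.val_injective _ (by rw [e1, f1] <;> omega)))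
    · intro i
      by_cases h0 : (i : ℕ) = 0
      · have hmem : ((1:ℕ) : ZMod (3*k+1)) ∈ (Sdef k)ᶜ := by
          rw [mem_compl_iff k hk]
          left
          rw [ZMod.val_cast_of_lt (by omega)]
        refine ⟨SimpleGraph.connectedComponentMk _ ⟨((1:ℕ) : ZMod (3*k+1)), hmem⟩, ?_⟩
        apply Fin.ext
        show fval k _ = (i : ℕ)
        unfold fval
        rw [ZMod.val_cast_of_lt (by omega)]
        simp [h0]
      · have hi := i.2
        have hmem : ((3*(i:ℕ) : ℕ) : ZMod (3*k+1)) ∈ (Sdef k)ᶜ := by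
          rw [mem_compl_iff k hk]
          right; right
          exact ⟨(i:ℕ), by omega, by omega,
            by rw [ZMod.val_cast_of_lt (by omega)]⟩
        refine ⟨SimpleGraph.connectedComponentMk _ ⟨((3*(i:ℕ) : ℕ) : ZMod (3*k+1)), hmem⟩, ?_⟩
        apply Fin.ext
        show fval k _ = (i : ℕ)
        unfold fval
        rw [ZMod.val_cast_of_lt (by omega), if_neg (by omega), if_neg (by omega)]
        omega
  rw [Nat.card_eq_of_bijective F hbij, Nat.card_eq_fintype_card, Fintype.card_fin]

lemma ncard_compl (k : ℕ) (hk : 3 ≤ k) : ((Sdef k)ᶜ).ncard = k + 1 := by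
  classical
  set F : Finset ℕ :=
    insert 1 (insert (3*k-1) ((Finset.Icc 1 (k-1)).image (fun t => 3*t))) with hF
  have hmemF : ∀ m : ℕ, m ∈ F ↔
      (m = 1 ∨ m = 3*k-1 ∨ ∃ t : ℕ, 1 ≤ t ∧ t ≤ k-1 ∧ m = 3*t) := by
    intro m
    simp only [hF, Finset.mem_insert, Finset.mem_image, Finset.mem_Icc]
    constructor
    · rintro (h | h | ⟨t, ⟨h1, h2⟩, h3⟩)
      · exact Or.inl h
      · exact Or.inr (Or.inl h)
      · exact Or.inr (Or.inr ⟨t, h1, h2, h3.symm⟩)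
    · rintro (h | h | ⟨t, h1, h2, h3⟩)
      · exact Or.inl h
      · exact Or.inr (Or.inl h)
      · exact Or.inr (Or.inr ⟨t, ⟨h1, h2⟩, h3.symm⟩)
  have hbound : ∀ m ∈ F, m < 3*k+1 := by
    intro m hm
    rcases (hmemF m).1 hm with h|h|⟨t,h1,h2,h3⟩ <;> omega
  have himg : ((Sdef k)ᶜ) = (fun m : ℕ => (m : ZMod (3*k+1))) '' ↑F := by
    ext v
    rw [mem_compl_iff k hk]
    constructor
    · intro h
      refine ⟨v.val, ?_, ?_⟩
      · rw [Finset.mem_coe, hmemF]; exact h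
      · exact ZMod.natCast_rightInverse v
    · rintro ⟨m, hm, rfl⟩
      rw [Finset.mem_coe, hmemF] at hm
      rw [ZMod.val_natCast, Nat.mod_eq_of_lt (hbound m (by rw [hmemF]; exact hm))]
      exact hm
  rw [himg, Set.ncard_image_of_injOn, Set.ncard_coe_finset]
  · rw [hF]
    rw [Finset.card_insert_of_notMem, Finset.card_insert_of_notMem,
      Finset.card_image_of_injective _ (fun a b hab => by omega), Nat.card_Icc]
    · omega
    · simp only [Finset.mem_image, Finset.mem_Icc]
      rintro ⟨t, ⟨h1, h2⟩, h3⟩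
      omega
    · simp only [Finset.mem_insert, Finset.mem_image, Finset.mem_Icc]
      rintro (h | ⟨t, ⟨h1, h2⟩, h3⟩) <;> omega
  · intro a ha b hb hab
    have := congrArg ZMod.val hab
    rw [ZMod.val_natCast, ZMod.val_natCast, Nat.mod_eq_of_lt (hbound a ha),
      Nat.mod_eq_of_lt (hbound b hb)] at this
    exact this

lemma ncard_S (k : ℕ) (hk : 3 ≤ k) : (Sdef k).ncard = 2*k := by
  have h := Set.ncard_add_ncard_compl (Sdef k)
  rw [ncard_compl k hk, Nat.card_zmod] at h
  omega


theorem stmt15 (k : ℕ) (hk : 3 ≤ k) :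
    let G := circGraph (3*k+1) {1, 2, 4}
    let G' := G.deleteEdges {s(((1 : ℕ) : ZMod (3*k+1)), ((3 : ℕ) : ZMod (3*k+1)))}
    let S : Set (ZMod (3*k+1)) :=
      {v | v = ((2 : ℕ) : ZMod (3*k+1)) ∨ v = ((3*k-2 : ℕ) : ZMod (3*k+1)) ∨
        v = ((3*k : ℕ) : ZMod (3*k+1)) ∨ v = ((3*k+1 : ℕ) : ZMod (3*k+1)) ∨
        ∃ t : ℕ, 2 ≤ t ∧ t ≤ k - 1 ∧
          (v = ((3*t-2 : ℕ) : ZMod (3*k+1)) ∨ v = ((3*t-1 : ℕ) : ZMod (3*k+1)))}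
    IsVertexCut G' S ∧ S.ncard = 2*k ∧ numComp G' S = k ∧
      toughness G' ≤ 2 ∧ (2 : ℝ) < (2*(k : ℝ)) / ((k : ℝ) - 1) := by
  intro G G' S
  have hnum : numComp G' S = k := card_comp k hk
  have hcut : IsVertexCut G' S := by rw [IsVertexCut, hnum]; omega
  have hncard : S.ncard = 2*k := ncard_S k hk
  refine ⟨hcut, hncard, hnum, ?_, ?_⟩
  · have hk0 : (k:ℝ) ≠ 0 := Nat.cast_ne_zero.2 (by omega)
    have hmem : (2:ℝ) ∈ {x : ℝ | ∃ T : Set (ZMod (3*k+1)),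
        IsVertexCut G' T ∧ x = (T.ncard : ℝ) / (numComp G' T : ℝ)} := by
      refine ⟨S, hcut, ?_⟩
      rw [hnum, hncard]
      push_cast
      field_simp
    exact csInf_le ⟨0, by rintro x ⟨T, hT, rfl⟩; positivity⟩ hmem
  · have hk3 : (3:ℝ) ≤ (k:ℝ) := by exact_mod_cast hk
    rw [lt_div_iff₀ (by linarith)]
    linarith
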